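/- Fix n ≥ 1 and x = (x₁, …, xₙ) ∈ [0,∞)ⁿ satisfying condition (H). Under P^(x), P(S_k > 0 for all 1 ≤ k ≤ n) = g(n) = P(S_k ≥ 0 for all 1 ≤ k ≤ n); in particular these probabilities do not depend on x. -/

import Mathlib

open scoped Classical
open List

/-- double factorial (2n-1)!! -/
def df : ℕ → ℕ
  | 0 => 1
  | n+1 => (2*n+1) * df n

lemma df_pos (n : ℕ) : 0 < df n := by
  induction n with
  | zero => simp [df]
  | succ n ih => rw [df]; exact Nat.mul_pos (by omega) ih

lemma df_mul_fact (n : ℕ) : df n * (2^n * n.factorial) = (2*n).factorial := by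
  induction n with
  | zero => simp [df]
  | succ n ih =>
    have h2 : 2*(n+1) = (2*n+1)+1 := by ring
    rw [df, h2, Nat.factorial_succ, Nat.factorial_succ, Nat.factorial_succ]
    rw [show (2*n+1) = 2*n+1 from rfl]
    have : (2*n+1) * df n * (2^(n+1) * ((n+1) * n.factorial))
        = ((2*n+1)+1) * ((2*n+1) * (df n * (2^n * n.factorial))) := by ring
    rw [this, ih]

noncomputable def gr (n : ℕ) : ℝ := (df n : ℝ) / (2^n * n.factorial)

lemma gr_rec (k : ℕ) : ((k:ℝ)+1) * gr (k+1) = ((k:ℝ) + 1/2) * gr k := by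
  unfold gr
  rw [df]
  push_cast [Nat.factorial_succ]
  have h1 : (2:ℝ)^(k+1) = 2 * 2^k := by ring
  rw [h1]
  have h2 : (2:ℝ)^k ≠ 0 := by positivity
  have h3 : ((k:ℝ)+1) ≠ 0 := by positivity
  have h4 : ((Nat.factorial k : ℕ):ℝ) ≠ 0 := by exact_mod_cast (Nat.factorial_pos k).ne'
  field_simp

lemma gr_conv (n : ℕ) : ∑ k ∈ Finset.range (n+1), gr k * gr (n-k) = 1 := by
  induction n with
  | zero => simp [gr, df]
  | succ n ih =>
    -- (n+1) * S(n+1) = (n+1) * S n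
    have key : ((n:ℝ)+1) * (∑ k ∈ Finset.range (n+2), gr k * gr (n+1-k))
        = ((n:ℝ)+1) * (∑ k ∈ Finset.range (n+1), gr k * gr (n-k)) := by
      -- symmetry helper: for any m, ∑_{k≤m} k g_k g_{m-k} = ∑_{k≤m} (m-k) g_k g_{m-k}
      have symm : ∀ m : ℕ, ∑ k ∈ Finset.range (m+1), (k:ℝ) * (gr k * gr (m-k))
          = ∑ k ∈ Finset.range (m+1), ((m:ℝ)-k) * (gr k * gr (m-k)) := by
        intro m
        rw [← Finset.sum_range_reflect (fun k => (k:ℝ) * (gr k * gr (m-k))) (m+1)]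
        apply Finset.sum_congr rfl
        intro k hk
        simp only [Finset.mem_range] at hk
        have hk' : k ≤ m := by omega
        have e1 : m + 1 - 1 - k = m - k := by omega
        have e2 : m - (m - k) = k := by omega
        rw [e1, e2]
        have : ((m - k : ℕ) : ℝ) = (m:ℝ) - k := by
          push_cast [Nat.cast_sub hk']; ring
        rw [this]; ring
      -- hence ∑ k g_k g_{m-k} = m/2 * S m
      have half : ∀ m : ℕ, ∑ k ∈ Finset.range (m+1), (k:ℝ) * (gr k * gr (m-k))
          = (m:ℝ)/2 * ∑ k ∈ Finset.range (m+1), gr k * gr (m-k) := by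
        intro m
        have h := symm m
        have h2 : (2:ℝ) * ∑ k ∈ Finset.range (m+1), (k:ℝ) * (gr k * gr (m-k))
            = (m:ℝ) * ∑ k ∈ Finset.range (m+1), gr k * gr (m-k) := by
          rw [two_mul]
          nth_rewrite 2 [h]
          rw [← Finset.sum_add_distrib, Finset.mul_sum]
          apply Finset.sum_congr rfl
          intro k _; ring
        linarith
      -- LHS: (n+1) S(n+1) = ∑ (k + (n+1-k)) g g = 2 ∑ k g g over range (n+2)
      have lhs1 : ((n:ℝ)+1) * (∑ k ∈ Finset.range (n+2), gr k * gr (n+1-k))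
          = 2 * ∑ k ∈ Finset.range (n+2), (k:ℝ) * (gr k * gr (n+1-k)) := by
        have := half (n+1)
        push_cast at this
        rw [this]; ring
      -- shift index: ∑_{k ∈ range (n+2)} k g_k g_{n+1-k} = ∑_{j ∈ range (n+1)} (j+1) g_{j+1} g_{n-j}
      have shift : ∑ k ∈ Finset.range (n+2), (k:ℝ) * (gr k * gr (n+1-k))
          = ∑ j ∈ Finset.range (n+1), ((j:ℝ)+1) * (gr (j+1) * gr (n-j)) := by
        rw [Finset.sum_range_succ'] -- splits off k=0
        simp only [Nat.cast_zero, zero_mul, add_zero]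
        apply Finset.sum_congr rfl
        intro j hj
        have : n + 1 - (j+1) = n - j := by omega
        rw [this]; push_cast; ring
      have rec' : ∀ j : ℕ, ((j:ℝ)+1) * (gr (j+1) * gr (n-j))
          = ((j:ℝ) + 1/2) * (gr j * gr (n-j)) := by
        intro j
        have := gr_rec j
        calc ((j:ℝ)+1) * (gr (j+1) * gr (n-j)) = (((j:ℝ)+1) * gr (j+1)) * gr (n-j) := by ring
          _ = (((j:ℝ) + 1/2) * gr j) * gr (n-j) := by rw [this]
          _ = ((j:ℝ) + 1/2) * (gr j * gr (n-j)) := by ring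
      rw [lhs1, shift]
      rw [Finset.sum_congr rfl (fun j _ => rec' j)]
      have expand : ∑ j ∈ Finset.range (n+1), ((j:ℝ) + 1/2) * (gr j * gr (n-j))
          = (∑ j ∈ Finset.range (n+1), (j:ℝ) * (gr j * gr (n-j)))
            + 1/2 * ∑ j ∈ Finset.range (n+1), gr j * gr (n-j) := by
        rw [Finset.mul_sum, ← Finset.sum_add_distrib]
        apply Finset.sum_congr rfl; intro j _; ring
      rw [expand, half n]
      ring
    have hne : ((n:ℝ)+1) ≠ 0 := by positivity
    have := mul_left_cancel₀ hne key
    rw [this, ih]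


lemma nat_conv (n : ℕ) :
    ∑ k ∈ Finset.range (n+1), n.choose k * df k * df (n-k) = 2^n * n.factorial := by
  have cast_eq : ∀ k ∈ Finset.range (n+1),
      ((n.choose k * df k * df (n-k) : ℕ) : ℝ) = 2^n * n.factorial * (gr k * gr (n-k)) := by
    intro k hk
    simp only [Finset.mem_range] at hk
    have hk' : k ≤ n := by omega
    unfold gr
    have hfact : (n.choose k) * k.factorial * (n-k).factorial = n.factorial :=
      Nat.choose_mul_factorial_mul_factorial hk'
    have h2 : (2:ℝ)^n = 2^k * 2^(n-k) := by
      rw [← pow_add]; congr 1; omega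
    have hk0 : ((k.factorial : ℕ):ℝ) ≠ 0 := by exact_mod_cast (Nat.factorial_pos k).ne'
    have hnk0 : (((n-k).factorial : ℕ):ℝ) ≠ 0 := by exact_mod_cast (Nat.factorial_pos (n-k)).ne'
    have h2k : (2:ℝ)^k ≠ 0 := by positivity
    have h2nk : (2:ℝ)^(n-k) ≠ 0 := by positivity
    push_cast
    rw [h2]
    field_simp
    push_cast [← hfact]
    ring
  have : ((∑ k ∈ Finset.range (n+1), n.choose k * df k * df (n-k) : ℕ) : ℝ)
      = ((2^n * n.factorial : ℕ) : ℝ) := by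
    rw [Nat.cast_sum, Finset.sum_congr rfl cast_eq, ← Finset.mul_sum, gr_conv, mul_one]
    push_cast; ring
  exact_mod_cast this

-- final connection
lemma df_eq_central (n : ℕ) : (df n : ℝ) / (2^n * n.factorial) = ((2*n).choose n : ℝ) / 4^n := by
  have h : (2*n).choose n * n.factorial * n.factorial = (2*n).factorial := by
    have := Nat.choose_mul_factorial_mul_factorial (show n ≤ 2*n by omega)
    simpa [show 2*n - n = n by omega] using this
  have hd := df_mul_fact n
  have h4 : (4:ℝ)^n = 2^n * 2^n := by rw [← mul_pow]; norm_num
  have hf : ((n.factorial:ℕ):ℝ) ≠ 0 := by exact_mod_cast (Nat.factorial_pos n).ne'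
  have h2 : (2:ℝ)^n ≠ 0 := by positivity
  rw [h4]
  rw [div_eq_div_iff (by positivity) (by positivity)]
  have : (df n : ℝ) * (2^n * n.factorial) = ((2*n).factorial : ℝ) := by exact_mod_cast congrArg Nat.cast hd
  have h' : (((2*n).choose n : ℕ):ℝ) * n.factorial * n.factorial = ((2*n).factorial : ℝ) := by
    exact_mod_cast congrArg Nat.cast h
  apply mul_right_cancel₀ hf
  linear_combination (2:ℝ)^n * this - (2:ℝ)^n * h'

def sgns : List ℝ → List (List ℝ)
  | [] => [[]]
  | a :: t => (sgns t).flatMap (fun l => [a::l, (-a)::l])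

def arrs (L : List ℝ) : List (List ℝ) := L.permutations.flatMap sgns

lemma map_abs_of_mem_sgns {t l : List ℝ} (hpos : ∀ a ∈ t, 0 < a)
    (h : l ∈ sgns t) : l.map abs = t := by
  induction t generalizing l with
  | nil => simp [sgns] at h; simp [h]
  | cons a t ih =>
    simp only [sgns, List.mem_flatMap] at h
    obtain ⟨l0, hl0, hl⟩ := h
    have ha : 0 < a := hpos a (by simp)
    have ht : ∀ b ∈ t, 0 < b := fun b hb => hpos b (by simp [hb])
    simp only [List.mem_cons, List.mem_singleton] at hl
    rcases hl with rfl | hl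
    · simp [abs_of_pos ha, ih ht hl0]
    · simp at hl; subst hl
      simp [abs_of_neg (neg_neg_of_pos ha) , ih ht hl0, abs_of_pos ha]

lemma mem_sgns_of_map_abs {t l : List ℝ} (hpos : ∀ a ∈ t, 0 < a)
    (h : l.map abs = t) : l ∈ sgns t := by
  induction t generalizing l with
  | nil => simp at h; simp [h, sgns]
  | cons a t ih =>
    cases l with
    | nil => simp at h
    | cons b l0 =>
      simp only [List.map_cons, List.cons.injEq] at h
      obtain ⟨hb, hl0⟩ := h
      have ht : ∀ c ∈ t, 0 < c := fun c hc => hpos c (by simp [hc])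
      have hmem := ih ht hl0
      simp only [sgns, List.mem_flatMap]
      refine ⟨l0, hmem, ?_⟩
      have ha : 0 < a := hpos a (by simp)
      rcases (abs_eq ha.le).mp hb with rfl | rfl <;> simp

lemma length_of_mem_sgns {t l : List ℝ} (h : l ∈ sgns t) : l.length = t.length := by
  induction t generalizing l with
  | nil => simp [sgns] at h; simp [h]
  | cons a t ih =>
    simp only [sgns, List.mem_flatMap] at h
    obtain ⟨l0, hl0, hl⟩ := h
    simp only [List.mem_cons, List.mem_singleton] at hl
    rcases hl with rfl | hl
    · simp [ih hl0]
    · simp at hl; subst hl; simp [ih hl0]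

lemma length_sgns (t : List ℝ) : (sgns t).length = 2^t.length := by
  induction t with
  | nil => simp [sgns]
  | cons a t ih =>
    rw [sgns, List.length_flatMap]
    have h1 : ∀ b ∈ (sgns t).map (fun l => [a :: l, -a :: l].length), b = 2 := by
      intro b hb
      simp only [List.mem_map, Function.comp] at hb
      obtain ⟨p, _, rfl⟩ := hb; simp
    rw [List.eq_replicate_of_mem h1, List.sum_replicate]
    simp [ih]
    ring

lemma nodup_sgns {t : List ℝ} (hpos : ∀ a ∈ t, 0 < a) : (sgns t).Nodup := by
  induction t with
  | nil => simp [sgns]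
  | cons a t ih =>
    have ha : 0 < a := hpos a (by simp)
    have ht : ∀ b ∈ t, 0 < b := fun b hb => hpos b (by simp [hb])
    rw [sgns, List.nodup_flatMap]
    constructor
    · intro l0 _
      refine List.nodup_cons.mpr ⟨?_, List.nodup_singleton _⟩
      simp only [List.mem_singleton]
      intro h
      have : a = -a := by injection h
      linarith
    · have hnd : (sgns t).Nodup := ih ht
      refine hnd.imp ?_
      intro l1 l2 hne s hs1 hs2
      simp only [List.mem_cons, List.mem_singleton, List.not_mem_nil, or_false] at hs1 hs2
      apply hne
      rcases hs1 with rfl | rfl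
      · rcases hs2 with h | h
        · exact (List.cons_eq_cons.mp h).2
        · exfalso; have := (List.cons_eq_cons.mp h).1; linarith
      · rcases hs2 with h | h
        · exfalso; have := (List.cons_eq_cons.mp h).1; linarith
        · exact (List.cons_eq_cons.mp h).2

lemma mem_arrs_iff {L l : List ℝ} (hpos : ∀ a ∈ L, 0 < a) :
    l ∈ arrs L ↔ (l.map abs).Perm L := by
  constructor
  · intro h
    simp only [arrs, List.mem_flatMap, List.mem_permutations] at h
    obtain ⟨p, hp, hl⟩ := h
    have hppos : ∀ a ∈ p, 0 < a := fun a ha => hpos a (hp.mem_iff.mp ha)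
    rw [map_abs_of_mem_sgns hppos hl]
    exact hp
  · intro h
    simp only [arrs, List.mem_flatMap, List.mem_permutations]
    refine ⟨l.map abs, h, mem_sgns_of_map_abs ?_ rfl⟩
    intro a ha
    exact hpos a (h.mem_iff.mp ha)

lemma nodup_arrs {L : List ℝ} (hpos : ∀ a ∈ L, 0 < a) (hnd : L.Nodup) :
    (arrs L).Nodup := by
  rw [arrs, List.nodup_flatMap]
  constructor
  · intro p hp
    rw [List.mem_permutations] at hp
    exact nodup_sgns (fun a ha => hpos a (hp.mem_iff.mp ha))
  · have hnp : L.permutations.Nodup := List.nodup_permutations L hnd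
    refine List.Pairwise.imp_of_mem ?_ hnp
    intro p q hp hq hne
    rw [List.mem_permutations] at hp hq
    intro s hsp hsq
    have h1 := map_abs_of_mem_sgns (fun a ha => hpos a (hp.mem_iff.mp ha)) hsp
    have h2 := map_abs_of_mem_sgns (fun a ha => hpos a (hq.mem_iff.mp ha)) hsq
    exact hne (h1 ▸ h2)

lemma length_arrs {L : List ℝ} : (arrs L).length = 2^L.length * L.length.factorial := by
  rw [arrs, List.length_flatMap]
  have : ∀ p ∈ L.permutations, (sgns p).length = 2^L.length := by
    intro p hp
    rw [List.mem_permutations] at hp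
    rw [length_sgns, hp.length_eq]
  have h1 : ∀ b ∈ L.permutations.map (fun p => (sgns p).length), b = 2^L.length := by
    intro b hb
    simp only [List.mem_map, Function.comp] at hb
    obtain ⟨p, hp, rfl⟩ := hb
    rw [length_sgns, (List.mem_permutations.mp hp).length_eq]
  rw [List.eq_replicate_of_mem h1, List.sum_replicate]
  simp [List.length_permutations, mul_comm]

noncomputable def AF (L : List ℝ) : Finset (List ℝ) := (arrs L).toFinset

def pos (l : List ℝ) : Prop := ∀ k, 1 ≤ k → k ≤ l.length → 0 < (l.take k).sum

noncomputable def bcount (L : List ℝ) : ℕ := ((AF L).filter pos).card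

def Good (L : List ℝ) : Prop :=
  (∀ a ∈ L, 0 < a) ∧ ∀ s : List ℝ, s ≠ [] → (s.map abs).Subperm L → s.sum ≠ 0

lemma sum_map_neg (u : List ℝ) : (u.map (fun x => -x)).sum = -u.sum := by
  induction u with
  | nil => simp
  | cons a t ih => simp [ih]; ring

lemma sum_drop (u : List ℝ) (m : ℕ) : (u.drop m).sum = u.sum - (u.take m).sum := by
  have h := congrArg List.sum (List.take_append_drop m u)
  rw [List.sum_append] at h
  linarith

lemma sum_take_add (l : List ℝ) (i j : ℕ) :
    (l.take (i+j)).sum = (l.take i).sum + ((l.drop i).take j).sum := by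
  rw [List.take_add, List.sum_append]

lemma Good.sub {L T : List ℝ} (hG : Good L) (hT : T.Sublist L) : Good T := by
  refine ⟨fun a ha => hG.1 a (hT.subset ha), fun s hs hsub => hG.2 s hs (hsub.trans hT.subperm)⟩

lemma Good.nodup {L : List ℝ} (hG : Good L) : L.Nodup := by
  by_contra h
  rw [List.nodup_iff_count_le_one] at h
  push_neg at h
  obtain ⟨a, ha⟩ := h
  have ha2 : 2 ≤ L.count a := ha
  have hmem : a ∈ L := List.count_pos_iff.mp (by omega)
  have hap : 0 < a := hG.1 a hmem
  have hsub : (List.replicate 2 a).Sublist L := List.replicate_sublist_iff.mpr ha2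
  have : ([a, -a].map abs).Subperm L := by
    have : [a, -a].map abs = List.replicate 2 a := by
      simp [abs_of_pos hap, List.replicate]
    rw [this]
    exact hsub.subperm
  have := hG.2 [a, -a] (by simp) this
  simp at this

lemma mem_AF {L l : List ℝ} (hpos : ∀ a ∈ L, 0 < a) :
    l ∈ AF L ↔ (l.map abs).Perm L := by
  rw [AF, List.mem_toFinset, mem_arrs_iff hpos]

lemma length_of_mem_AF {L l : List ℝ} (hpos : ∀ a ∈ L, 0 < a) (h : l ∈ AF L) :
    l.length = L.length := by
  have := ((mem_AF hpos).mp h).length_eq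
  simpa using this

lemma nodup_map_abs {L l : List ℝ} (hG : Good L) (h : l ∈ AF L) : (l.map abs).Nodup :=
  ((mem_AF hG.1).mp h).nodup_iff.mpr hG.nodup

lemma seg_ne {L l : List ℝ} (hG : Good L) (hl : l ∈ AF L) {i j : ℕ}
    (hij : i < j) (hj : j ≤ l.length) : (l.take i).sum ≠ (l.take j).sum := by
  have hperm := (mem_AF hG.1).mp hl
  set s := (l.drop i).take (j - i) with hs
  have hdecomp : (l.take j).sum = (l.take i).sum + s.sum := by
    have : j = i + (j - i) := by omega
    rw [this, sum_take_add]
  have hsne : s ≠ [] := by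
    have : s.length = min (j-i) (l.length - i) := by simp [hs]
    intro hnil
    rw [hnil] at this
    simp at this
    omega
  have hsub : s.Sublist l := ((List.take_sublist _ _).trans (List.drop_sublist _ _))
  have hsp : (s.map abs).Subperm L := ((hsub.map abs).subperm).trans hperm.subperm
  have := hG.2 s hsne hsp
  intro heq
  apply this
  rw [heq] at hdecomp
  linarith

lemma exists_unique_argmax {L l : List ℝ} (hG : Good L) (hl : l ∈ AF L) :
    ∃! k, k ≤ l.length ∧ ∀ j, j ≤ l.length → j ≠ k → (l.take j).sum < (l.take k).sum := by
  obtain ⟨k, hk, hmax⟩ := Finset.exists_max_image (Finset.range (l.length + 1))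
    (fun j => (l.take j).sum) ⟨0, by simp⟩
  simp only [Finset.mem_range] at hk
  refine ⟨k, ⟨by omega, ?_⟩, ?_⟩
  · intro j hj hjk
    have hle := hmax j (by simp; omega)
    rcases lt_or_eq_of_le hle with h | h
    · exact h
    · exfalso
      rcases Nat.lt_or_ge j k with hc | hc
      · exact seg_ne hG hl hc (by omega) h
      · have : k < j := by omega
        exact seg_ne hG hl this hj h.symm
  · intro y ⟨hy, hymax⟩
    by_contra hne
    have h1 := hymax k (by omega) (fun h => hne h.symm)
    have h2 : (l.take y).sum < (l.take k).sum := by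
      apply lt_of_le_of_ne (hmax y (by simp; omega))
      intro h
      rcases Nat.lt_or_ge y k with hc | hc
      · exact seg_ne hG hl hc (by omega) h
      · have : k < y := by omega
        exact seg_ne hG hl this (by omega) h.symm
    linarith

noncomputable def fM (l : List ℝ) : ℕ :=
  if h : ∃ k, k ≤ l.length ∧ ∀ j, j ≤ l.length → j ≠ k → (l.take j).sum < (l.take k).sum
  then h.choose else 0

lemma fM_spec {L l : List ℝ} (hG : Good L) (hl : l ∈ AF L) :
    fM l ≤ l.length ∧ ∀ j, j ≤ l.length → j ≠ fM l →
      (l.take j).sum < (l.take (fM l)).sum := by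
  obtain ⟨k, hk, _⟩ := exists_unique_argmax hG hl
  have h : ∃ k, k ≤ l.length ∧ ∀ j, j ≤ l.length → j ≠ k →
      (l.take j).sum < (l.take k).sum := ⟨k, hk⟩
  rw [fM, dif_pos h]
  exact h.choose_spec

lemma fM_eq {L l : List ℝ} (hG : Good L) (hl : l ∈ AF L) {k : ℕ}
    (hk : k ≤ l.length) (hmax : ∀ j, j ≤ l.length → j ≠ k →
      (l.take j).sum < (l.take k).sum) : fM l = k := by
  obtain ⟨m, hm, huniq⟩ := exists_unique_argmax hG hl
  rw [huniq (fM l) (fM_spec hG hl), huniq k ⟨hk, hmax⟩]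

def phi (k : ℕ) (l : List ℝ) : List ℝ :=
  (l.take k).reverse ++ (l.drop k).map (fun x => -x)

lemma phi_take (k : ℕ) (l : List ℝ) (hk : k ≤ l.length) :
    (phi k l).take k = (l.take k).reverse :=
  List.take_left' (by simp [hk])

lemma phi_drop (k : ℕ) (l : List ℝ) (hk : k ≤ l.length) :
    (phi k l).drop k = (l.drop k).map (fun x => -x) :=
  List.drop_left' (by simp [hk])

lemma phi_length (k : ℕ) (l : List ℝ) : (phi k l).length = l.length := by
  simp only [phi, List.length_append, List.length_reverse, List.length_take,
    List.length_map, List.length_drop, Nat.min_def]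
  split_ifs <;> omega

lemma phi_phi (k : ℕ) (l : List ℝ) (hk : k ≤ l.length) : phi k (phi k l) = l := by
  conv_lhs => rw [phi, phi_take k l hk, phi_drop k l hk]
  simp [List.map_map, Function.comp]

lemma phi_mem_AF {L l : List ℝ} (hpos : ∀ a ∈ L, 0 < a) (hl : l ∈ AF L) (k : ℕ) :
    phi k l ∈ AF L := by
  rw [mem_AF hpos] at hl ⊢
  have h1 : (phi k l).map abs = ((l.take k).map abs).reverse ++ (l.drop k).map abs := by
    simp [phi, List.map_reverse, List.map_map]
    congr 1
    apply List.map_congr_left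
    intro a _
    simp [abs_neg]
  rw [h1]
  calc ((l.take k).map abs).reverse ++ (l.drop k).map abs
      ~ ((l.take k).map abs) ++ (l.drop k).map abs :=
        List.Perm.append_right _ (List.reverse_perm _)
    _ = (l.take k ++ l.drop k).map abs := by rw [List.map_append]
    _ = l.map abs := by rw [List.take_append_drop]
    _ ~ L := hl

-- prefix sums of take k part agree
lemma take_take_sum (l : List ℝ) {i k : ℕ} (hik : i ≤ k) :
    ((l.take k).take i).sum = (l.take i).sum := by
  rw [List.take_take, min_eq_left hik]

lemma reverse_take_sum (l : List ℝ) {j k : ℕ} (hj : j ≤ k) (hk : k ≤ l.length) :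
    (((l.take k).reverse).take j).sum = (l.take k).sum - (l.take (k - j)).sum := by
  rw [List.take_reverse, List.sum_reverse, sum_drop, List.length_take, min_eq_left hk,
    List.take_take, min_eq_left (show k - j ≤ k by omega)]

lemma drop_take_sum (l : List ℝ) (k j : ℕ) :
    ((l.drop k).take j).sum = (l.take (k + j)).sum - (l.take k).sum := by
  rw [sum_take_add l k j]; ring

-- Direction A: argmax at k ⟹ phi has positive prefix walks on both parts
lemma amax_phi {l : List ℝ} {k : ℕ} (hk : k ≤ l.length)
    (hA : ∀ j, j ≤ l.length → j ≠ k → (l.take j).sum < (l.take k).sum) :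
    pos ((phi k l).take k) ∧ pos ((phi k l).drop k) := by
  rw [phi_take k l hk, phi_drop k l hk]
  constructor
  · intro j hj1 hj2
    simp only [List.length_reverse, List.length_take, min_eq_left hk] at hj2
    rw [reverse_take_sum l hj2 hk]
    have := hA (k - j) (by omega) (by omega)
    linarith
  · intro j hj1 hj2
    simp only [List.length_map, List.length_drop] at hj2
    have htj : ((l.drop k).map (fun x => -x)).take j = ((l.drop k).take j).map (fun x => -x) := by
      rw [List.map_take]
    rw [htj, sum_map_neg, drop_take_sum]
    have := hA (k + j) (by omega) (by omega)
    linarith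

-- Direction B: positive prefix walks ⟹ phi has argmax at k
lemma phi_amax {l : List ℝ} {k : ℕ} (hk : k ≤ l.length)
    (h1 : pos (l.take k)) (h2 : pos (l.drop k)) :
    ∀ j, j ≤ (phi k l).length → j ≠ k →
      ((phi k l).take j).sum < ((phi k l).take k).sum := by
  have hlen1 : (l.take k).length = k := by rw [List.length_take, min_eq_left hk]
  have hlen2 : ((l.take k).reverse).length = k := by simp [hlen1]
  have hSk : ((phi k l).take k).sum = (l.take k).sum := by
    rw [phi_take k l hk, List.sum_reverse]
  intro j hj hjk
  rw [phi_length] at hj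
  rw [hSk]
  rcases Nat.lt_or_ge j k with hc | hc
  · -- j < k
    have : (phi k l).take j = ((l.take k).reverse).take j := by
      rw [phi, List.take_append, hlen2,
        show j - k = 0 by omega, List.take_zero, List.append_nil]
    rw [this, reverse_take_sum l (by omega) hk]
    have hpos' := h1 (k - j) (by omega) (by rw [hlen1]; omega)
    rw [take_take_sum l (by omega)] at hpos'
    linarith
  · -- j > k
    have hc' : k < j := by omega
    have : (phi k l).take j = ((l.take k).reverse) ++ (((l.drop k).map (fun x => -x)).take (j - k)) := by
      rw [phi, List.take_append, hlen2, List.take_of_length_le (by omega)]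
    rw [this, List.sum_append, List.sum_reverse, ← List.map_take, sum_map_neg]
    have hpos' := h2 (j - k) (by omega) (by rw [List.length_drop]; omega)
    linarith

lemma card_fM_eq {L : List ℝ} (hG : Good L) {k : ℕ} (hk : k ≤ L.length) :
    ((AF L).filter (fun l => fM l = k)).card
      = ((AF L).filter (fun l => pos (l.take k) ∧ pos (l.drop k))).card := by
  apply Finset.card_nbij' (phi k) (phi k)
  · intro l hl
    simp only [Finset.mem_coe, Finset.mem_filter] at hl ⊢
    obtain ⟨hlA, hfm⟩ := hl
    have hlen := length_of_mem_AF hG.1 hlA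
    have hk' : k ≤ l.length := by omega
    have hspec := fM_spec hG hlA
    rw [hfm] at hspec
    exact ⟨phi_mem_AF hG.1 hlA k, amax_phi hk' hspec.2⟩
  · intro l hl
    simp only [Finset.mem_coe, Finset.mem_filter] at hl ⊢
    obtain ⟨hlA, h1, h2⟩ := hl
    have hlen := length_of_mem_AF hG.1 hlA
    have hk' : k ≤ l.length := by omega
    have hmem := phi_mem_AF hG.1 hlA k
    refine ⟨hmem, ?_⟩
    apply fM_eq hG hmem (by rw [phi_length]; omega)
    exact phi_amax hk' h1 h2
  · intro l hl
    simp only [Finset.mem_coe, Finset.mem_filter] at hl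
    exact phi_phi k l (by rw [length_of_mem_AF hG.1 hl.1]; omega)
  · intro l hl
    simp only [Finset.mem_coe, Finset.mem_filter] at hl
    exact phi_phi k l (by rw [length_of_mem_AF hG.1 hl.1]; omega)

lemma filter_mem_of_sublist {T L : List ℝ} (hT : T.Sublist L) (hnd : L.Nodup) :
    L.filter (fun x => decide (x ∈ T)) = T := by
  induction hT with
  | slnil => simp
  | @cons l₁ l₂ a h ih =>
    have hnd' : l₂.Nodup := (List.nodup_cons.mp hnd).2
    have ha : a ∉ l₂ := (List.nodup_cons.mp hnd).1
    have haT : a ∉ l₁ := fun hmem => ha (h.subset hmem)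
    rw [List.filter_cons]
    simp only [haT, decide_eq_true_eq, if_neg]
    exact ih hnd'
  | @cons_cons l₁ l₂ a h ih =>
    have hnd' : l₂.Nodup := (List.nodup_cons.mp hnd).2
    have ha : a ∉ l₂ := (List.nodup_cons.mp hnd).1
    rw [List.filter_cons, if_pos (by simp)]
    congr 1
    rw [List.filter_congr (l := l₂) (q := fun x => decide (x ∈ l₁)) ?_]
    · exact ih hnd'
    · intro x hx
      simp only [List.mem_cons, decide_eq_decide]
      constructor
      · rintro (rfl | h2)
        · exact absurd hx ha
        · exact h2
      · exact Or.inr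

noncomputable def lcompl (T L : List ℝ) : List ℝ := L.filter (fun x => decide (x ∉ T))

lemma lcompl_sublist (T L : List ℝ) : (lcompl T L).Sublist L := List.filter_sublist (l := L)

lemma perm_T_lcompl {T L : List ℝ} (hT : T.Sublist L) (hnd : L.Nodup) :
    (T ++ lcompl T L).Perm L := by
  have h := List.filter_append_perm (fun x => decide (x ∈ T)) L
  rw [filter_mem_of_sublist hT hnd] at h
  have hc : L.filter (fun x => !decide (x ∈ T)) = lcompl T L := by
    apply List.filter_congr
    intro x _
    simp
  rwa [hc] at h

lemma lcompl_length {T L : List ℝ} (hT : T.Sublist L) (hnd : L.Nodup) :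
    (lcompl T L).length = L.length - T.length := by
  have := (perm_T_lcompl hT hnd).length_eq
  rw [List.length_append] at this
  omega

lemma lcompl_nil (L : List ℝ) : lcompl [] L = L := by
  unfold lcompl
  apply List.filter_eq_self.mpr
  intro a _
  simp

lemma lcompl_self {L : List ℝ} : lcompl L L = [] := by
  unfold lcompl
  apply List.filter_eq_nil_iff.mpr
  intro a ha
  simp [ha]

section blocks
variable {L l : List ℝ}

lemma map_abs_split (l : List ℝ) (k : ℕ) :
    l.map abs = (l.take k).map abs ++ (l.drop k).map abs := by
  rw [← List.map_append, List.take_append_drop]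

lemma block_take_mem (hG : Good L) (hl : l ∈ AF L) {k : ℕ} (hk : k ≤ L.length) :
    l.take k ∈ AF (L.filter (fun x => decide (x ∈ (l.take k).map abs))) := by
  set M := (l.take k).map abs with hM
  set T := L.filter (fun x => decide (x ∈ M)) with hT
  have hperm : (l.map abs).Perm L := (mem_AF hG.1).mp hl
  have hndl : (l.map abs).Nodup := nodup_map_abs hG hl
  have hMnd : M.Nodup := ((List.take_sublist k l).map abs).nodup hndl
  have hTnd : T.Nodup := hG.nodup.sublist (List.filter_sublist (l := L))
  have hmemTM : ∀ x, x ∈ M ↔ x ∈ T := by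
    intro x
    rw [hT, List.mem_filter]
    simp only [decide_eq_true_eq]
    constructor
    · intro hx
      exact ⟨hperm.mem_iff.mp (((List.take_sublist k l).map abs).subset hx), hx⟩
    · exact fun h => h.2
  have hTpos : ∀ a ∈ T, 0 < a := fun a ha => hG.1 a ((List.filter_sublist (l := L)).subset ha)
  rw [mem_AF hTpos]
  exact (List.perm_ext_iff_of_nodup hMnd hTnd).mpr hmemTM

lemma block_T_mem (hG : Good L) (hl : l ∈ AF L) {k : ℕ} (hk : k ≤ L.length) :
    (L.filter (fun x => decide (x ∈ (l.take k).map abs))) ∈ (List.sublistsLen k L).toFinset := by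
  rw [List.mem_toFinset, List.mem_sublistsLen]
  refine ⟨List.filter_sublist (l := L), ?_⟩
  have h1 := block_take_mem hG hl hk
  have hTpos : ∀ a ∈ L.filter (fun x => decide (x ∈ (l.take k).map abs)), 0 < a :=
    fun a ha => hG.1 a ((List.filter_sublist (l := L)).subset ha)
  have hlen := length_of_mem_AF hTpos h1
  rw [List.length_take] at hlen
  rw [← hlen]
  have : l.length = L.length := length_of_mem_AF hG.1 hl
  omega

lemma block_drop_mem (hG : Good L) (hl : l ∈ AF L) {k : ℕ} (hk : k ≤ L.length) :
    l.drop k ∈ AF (lcompl (L.filter (fun x => decide (x ∈ (l.take k).map abs))) L) := by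
  set M := (l.take k).map abs with hM
  set T := L.filter (fun x => decide (x ∈ M)) with hT
  have hperm : (l.map abs).Perm L := (mem_AF hG.1).mp hl
  have hndl : (l.map abs).Nodup := nodup_map_abs hG hl
  have hsplit := map_abs_split l k
  have hdisj : List.Disjoint ((l.take k).map abs) ((l.drop k).map abs) := by
    apply List.disjoint_of_nodup_append
    rw [← hsplit]; exact hndl
  have hD : ((l.drop k).map abs).Nodup := ((List.drop_sublist k l).map abs).nodup hndl
  have hCnd : (lcompl T L).Nodup := hG.nodup.sublist (lcompl_sublist T L)
  have hCpos : ∀ a ∈ lcompl T L, 0 < a := fun a ha => hG.1 a ((lcompl_sublist T L).subset ha)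
  rw [mem_AF hCpos]
  apply (List.perm_ext_iff_of_nodup hD hCnd).mpr
  intro x
  constructor
  · intro hx
    have hxl : x ∈ l.map abs := ((List.drop_sublist k l).map abs).subset hx
    have hxL : x ∈ L := hperm.mem_iff.mp hxl
    simp only [lcompl, List.mem_filter, decide_eq_true_eq]
    refine ⟨hxL, fun hxT => ?_⟩
    have hxM : x ∈ M := by
      rw [hT, List.mem_filter] at hxT
      simpa using hxT.2
    exact hdisj hxM hx
  · intro hx
    simp only [lcompl, List.mem_filter, decide_eq_true_eq] at hx
    obtain ⟨hxL, hxnT⟩ := hx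
    have hxM : x ∉ M := fun hxM =>
      hxnT (by rw [hT, List.mem_filter]; exact ⟨hxL, by simpa using hxM⟩)
    have hxl : x ∈ l.map abs := hperm.mem_iff.mpr hxL
    rw [hsplit, List.mem_append] at hxl
    exact hxl.resolve_left hxM

lemma append_block_mem (hG : Good L) {T u v : List ℝ} {k : ℕ}
    (hT : T ∈ (List.sublistsLen k L).toFinset)
    (hu : u ∈ AF T) (hv : v ∈ AF (lcompl T L)) :
    u ++ v ∈ AF L ∧ (u ++ v).take k = u ∧ (u ++ v).drop k = v ∧
      L.filter (fun x => decide (x ∈ (u.map abs))) = T := by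
  rw [List.mem_toFinset, List.mem_sublistsLen] at hT
  obtain ⟨hTsub, hTlen⟩ := hT
  have hTpos : ∀ a ∈ T, 0 < a := fun a ha => hG.1 a (hTsub.subset ha)
  have hCpos : ∀ a ∈ lcompl T L, 0 < a := fun a ha => hG.1 a ((lcompl_sublist T L).subset ha)
  have hulen : u.length = k := by rw [length_of_mem_AF hTpos hu, hTlen]
  have hpu : (u.map abs).Perm T := (mem_AF hTpos).mp hu
  have hpv : (v.map abs).Perm (lcompl T L) := (mem_AF hCpos).mp hv
  have hmemL : (u ++ v) ∈ AF L := by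
    rw [mem_AF hG.1, List.map_append]
    exact (hpu.append hpv).trans (perm_T_lcompl hTsub hG.nodup)
  refine ⟨hmemL, List.take_left' hulen, List.drop_left' hulen, ?_⟩
  have hcongr : L.filter (fun x => decide (x ∈ (u.map abs))) = L.filter (fun x => decide (x ∈ T)) := by
    apply List.filter_congr
    intro x _
    simp only [decide_eq_decide]
    exact hpu.mem_iff
  rw [hcongr]
  exact filter_mem_of_sublist hTsub hG.nodup

lemma card_pos_split (hG : Good L) {k : ℕ} (hk : k ≤ L.length) :
    ((AF L).filter (fun l => pos (l.take k) ∧ pos (l.drop k))).card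
      = ∑ T ∈ (List.sublistsLen k L).toFinset, bcount T * bcount (lcompl T L) := by
  rw [Finset.card_eq_sum_card_fiberwise
    (f := fun l => L.filter (fun x => decide (x ∈ (l.take k).map abs)))
    (t := (List.sublistsLen k L).toFinset)
    (fun l hl => block_T_mem hG (Finset.mem_filter.mp hl).1 hk)]
  apply Finset.sum_congr rfl
  intro T hT
  rw [bcount, bcount, ← Finset.card_product]
  apply Finset.card_nbij' (fun l => (l.take k, l.drop k)) (fun p => p.1 ++ p.2)
  · intro l hl
    simp only [Finset.mem_coe, Finset.mem_filter] at hl ⊢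
    obtain ⟨⟨hlA, hp1, hp2⟩, hfib⟩ := hl
    rw [Finset.mem_product]
    constructor
    · rw [Finset.mem_filter]
      exact ⟨by rw [← hfib]; exact block_take_mem hG hlA hk, hp1⟩
    · rw [Finset.mem_filter]
      exact ⟨by rw [← hfib]; exact block_drop_mem hG hlA hk, hp2⟩
  · intro p hp
    rw [Finset.mem_coe, Finset.mem_product, Finset.mem_filter, Finset.mem_filter] at hp
    obtain ⟨⟨hu, hupos⟩, hv, hvpos⟩ := hp
    obtain ⟨hmem, htake, hdrop, hfib⟩ := append_block_mem hG hT hu hv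
    simp only [Finset.mem_coe, Finset.mem_filter]
    refine ⟨⟨hmem, ?_, ?_⟩, ?_⟩
    · rw [htake]; exact hupos
    · rw [hdrop]; exact hvpos
    · rw [htake]; exact hfib
  · intro l hl
    exact List.take_append_drop k l
  · intro p hp
    rw [Finset.mem_coe, Finset.mem_product, Finset.mem_filter, Finset.mem_filter] at hp
    obtain ⟨⟨hu, _⟩, hv, _⟩ := hp
    obtain ⟨_, htake, hdrop, _⟩ := append_block_mem hG hT hu hv
    beta_reduce
    rw [htake, hdrop]

end blocks

lemma AF_nil : AF ([] : List ℝ) = {[]} := by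
  have h : arrs ([] : List ℝ) = [[]] := by
    rw [arrs, List.permutations_nil]
    simp [sgns]
  rw [AF, h]
  rfl

lemma nat_conv' (n : ℕ) :
    ∑ k ∈ Finset.range (n+1), n.choose k * (df k * df (n-k)) = 2^n * n.factorial := by
  simp only [← mul_assoc]
  exact nat_conv n

lemma pos_nil : pos ([] : List ℝ) := by
  intro k h1 h2
  simp at h2
  omega

lemma bcount_nil : bcount ([] : List ℝ) = 1 := by
  rw [bcount, AF_nil]
  rw [Finset.filter_singleton, if_pos pos_nil]
  rfl

lemma card_AF {L : List ℝ} (hG : Good L) :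
    (AF L).card = 2^L.length * L.length.factorial := by
  rw [AF, List.toFinset_card_of_nodup (nodup_arrs hG.1 hG.nodup), length_arrs]

lemma sublistsLen_zero_toFinset (L : List ℝ) :
    (List.sublistsLen 0 L).toFinset = {[]} := by
  ext T
  simp only [List.mem_toFinset, List.mem_sublistsLen, Finset.mem_singleton]
  constructor
  · rintro ⟨_, hlen⟩
    exact List.length_eq_zero_iff.mp hlen
  · rintro rfl
    exact ⟨List.nil_sublist L, rfl⟩

lemma sublistsLen_full_toFinset (L : List ℝ) :
    (List.sublistsLen L.length L).toFinset = {L} := by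
  ext T
  simp only [List.mem_toFinset, List.mem_sublistsLen, Finset.mem_singleton]
  constructor
  · rintro ⟨hsub, hlen⟩
    exact hsub.eq_of_length hlen
  · rintro rfl
    exact ⟨List.Sublist.refl _, rfl⟩

lemma card_sublistsLen_toFinset {L : List ℝ} (hnd : L.Nodup) (k : ℕ) :
    (List.sublistsLen k L).toFinset.card = L.length.choose k := by
  rw [List.toFinset_card_of_nodup (List.nodup_sublistsLen k hnd), List.length_sublistsLen]

theorem bcount_eq (n : ℕ) : ∀ L : List ℝ, L.length = n → Good L → bcount L = df n := by
  induction n using Nat.strong_induction_on with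
  | _ n ih =>
    intro L hLlen hG
    rcases Nat.eq_zero_or_pos n with rfl | hn
    · rw [List.length_eq_zero_iff] at hLlen
      subst hLlen
      exact bcount_nil
    · -- the fiberwise decomposition
      have hFk : ∀ k, k ≤ n →
          ((AF L).filter (fun l => fM l = k)).card
            = ∑ T ∈ (List.sublistsLen k L).toFinset, bcount T * bcount (lcompl T L) := by
        intro k hk
        rw [card_fM_eq hG (by omega), card_pos_split hG (by omega)]
      have htot : (AF L).card
          = ∑ k ∈ Finset.range (n+1), ((AF L).filter (fun l => fM l = k)).card := by
        apply Finset.card_eq_sum_card_fiberwise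
        intro l hl
        have h1 := (fM_spec hG hl).1
        have h2 := length_of_mem_AF hG.1 hl
        simp only [Finset.mem_coe, Finset.mem_range]
        omega
      -- value of the fibers
      have hF0 : ((AF L).filter (fun l => fM l = 0)).card = bcount L := by
        rw [hFk 0 (by omega), sublistsLen_zero_toFinset, Finset.sum_singleton,
          bcount_nil, lcompl_nil, one_mul]
      have hFn : ((AF L).filter (fun l => fM l = n)).card = bcount L := by
        rw [hFk n le_rfl, ← hLlen, sublistsLen_full_toFinset, Finset.sum_singleton,
          lcompl_self, bcount_nil, mul_one]
      have hFmid : ∀ k, 1 ≤ k → k ≤ n - 1 →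
          ((AF L).filter (fun l => fM l = k)).card = n.choose k * (df k * df (n-k)) := by
        intro k hk1 hk2
        rw [hFk k (by omega)]
        have hconst : ∀ T ∈ (List.sublistsLen k L).toFinset,
            bcount T * bcount (lcompl T L) = df k * df (n-k) := by
          intro T hT
          rw [List.mem_toFinset, List.mem_sublistsLen] at hT
          obtain ⟨hsub, hlen⟩ := hT
          have hGT : Good T := hG.sub hsub
          have hGC : Good (lcompl T L) := hG.sub (lcompl_sublist T L)
          have hClen : (lcompl T L).length = n - k := by
            rw [lcompl_length hsub hG.nodup, hLlen, hlen]
          rw [ih k (by omega) T hlen hGT, ih (n-k) (by omega) (lcompl T L) hClen hGC]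
        rw [Finset.sum_congr rfl hconst, Finset.sum_const, smul_eq_mul,
          card_sublistsLen_toFinset hG.nodup, hLlen]
      -- assemble
      obtain ⟨m, rfl⟩ : ∃ m, n = m + 1 := ⟨n - 1, by omega⟩
      have hcard : ∑ k ∈ Finset.range (m+1+1), ((AF L).filter (fun l => fM l = k)).card
          = 2^(m+1) * (m+1).factorial := by
        rw [← htot, card_AF hG, hLlen]
      rw [Finset.sum_range_succ, Finset.sum_range_succ'] at hcard
      have hmid : ∀ i ∈ Finset.range m,
          ((AF L).filter (fun l => fM l = i+1)).card
            = (m+1).choose (i+1) * (df (i+1) * df (m+1-(i+1))) := by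
        intro i hi
        simp only [Finset.mem_range] at hi
        exact hFmid (i+1) (by omega) (by omega)
      rw [Finset.sum_congr rfl hmid, hF0, hFn] at hcard
      have hB := nat_conv' (m+1)
      rw [Finset.sum_range_succ, Finset.sum_range_succ'] at hB
      have hdf0 : df 0 = 1 := rfl
      simp only [Nat.choose_zero_right, Nat.choose_self, Nat.sub_zero, Nat.sub_self,
        hdf0, one_mul, mul_one] at hB hcard
      omega

section glue
variable {n : ℕ} {x : Fin n → ℝ}

lemma subperm_nodup {u v : List ℝ} (h : u.Subperm v) (hv : v.Nodup) : u.Nodup := by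
  obtain ⟨w, hwperm, hwsub⟩ := h
  exact hwperm.nodup_iff.mp (hwsub.nodup hv)

lemma signed_sum_decomp (hpos : ∀ i, 0 < x i) (hinj : Function.Injective x) :
    ∀ s : List ℝ, (s.map abs).Subperm (List.ofFn x) →
      ∃ I J : Finset (Fin n), Disjoint I J ∧ I.card + J.card = s.length ∧
        s.sum = ∑ i ∈ I, x i - ∑ j ∈ J, x j ∧
        ∀ m : Fin n, m ∈ I ∪ J → x m ∈ s.map abs := by
  intro s
  induction s with
  | nil =>
    intro _
    exact ⟨∅, ∅, by simp, by simp, by simp, by simp⟩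
  | cons a t ih =>
    intro h
    have hLnd : (List.ofFn x).Nodup := (List.nodup_ofFn).mpr hinj
    have hnd : ((a :: t).map abs).Nodup := subperm_nodup h hLnd
    rw [List.map_cons] at h hnd
    have ht : (t.map abs).Subperm (List.ofFn x) :=
      ((List.sublist_cons_self |a| (t.map abs)).subperm).trans h
    obtain ⟨I, J, hdisj, hcard, hsum, hvals⟩ := ih ht
    have hmemL : |a| ∈ List.ofFn x := h.subset (List.mem_cons_self)
    obtain ⟨i0, hi0'⟩ := List.mem_ofFn.mp hmemL
    have hi0 : |a| = x i0 := hi0'.symm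
    have hfresh : i0 ∉ I ∪ J := by
      intro hmem
      have := hvals i0 hmem
      rw [← hi0] at this
      exact (List.nodup_cons.mp hnd).1 this
    have hi0I : i0 ∉ I := fun hc => hfresh (Finset.mem_union_left _ hc)
    have hi0J : i0 ∉ J := fun hc => hfresh (Finset.mem_union_right _ hc)
    have habs : 0 ≤ x i0 := (hpos i0).le
    rcases (abs_eq habs).mp hi0 with rfl | rfl
    · refine ⟨insert i0 I, J, ?_, ?_, ?_, ?_⟩
      · rw [Finset.disjoint_insert_left]
        exact ⟨hi0J, hdisj⟩
      · rw [Finset.card_insert_of_notMem hi0I]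
        simp [hcard]
        omega
      · rw [Finset.sum_insert hi0I, List.sum_cons, hsum]
        ring
      · intro m hm
        rw [Finset.union_comm, Finset.union_insert, Finset.mem_insert, Finset.union_comm] at hm
        rcases hm with rfl | hm
        · rw [List.map_cons, hi0]
          exact List.mem_cons_self
        · rw [List.map_cons]
          exact List.mem_cons_of_mem _ (hvals m hm)
    · refine ⟨I, insert i0 J, ?_, ?_, ?_, ?_⟩
      · rw [Finset.disjoint_insert_right]
        exact ⟨hi0I, hdisj⟩
      · rw [Finset.card_insert_of_notMem hi0J]
        simp [← hcard]
        omega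
      · rw [Finset.sum_insert hi0J, List.sum_cons, hsum]
        ring
      · intro m hm
        rw [Finset.union_insert, Finset.mem_insert] at hm
        rcases hm with rfl | hm
        · rw [List.map_cons, hi0]
          exact List.mem_cons_self
        · rw [List.map_cons]
          exact List.mem_cons_of_mem _ (hvals m hm)

lemma good_ofFn (hpos : ∀ i, 0 < x i) (hinj : Function.Injective x)
    (hH : ∀ I J : Finset (Fin n), I ≠ J → ∑ i ∈ I, x i ≠ ∑ j ∈ J, x j) :
    Good (List.ofFn x) := by
  constructor
  · intro a ha
    obtain ⟨i, rfl⟩ := List.mem_ofFn.mp ha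
    exact hpos i
  · intro s hs hsub hsum
    obtain ⟨I, J, hdisj, hcard, hdecomp, _⟩ := signed_sum_decomp hpos hinj s hsub
    have hIJ : I ≠ J := by
      intro hEq
      subst hEq
      have : I = ∅ := by simpa using disjoint_self.mp hdisj
      subst this
      simp at hcard
      exact hs (List.length_eq_zero_iff.mp hcard.symm)
    apply hH I J hIJ
    rw [hdecomp] at hsum
    linarith

noncomputable def toL (x : Fin n → ℝ) (ω : (Fin n → Bool) × Equiv.Perm (Fin n)) : List ℝ :=
  List.ofFn (fun i => (if ω.1 i then (1:ℝ) else -1) * x (ω.2 i))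

lemma S_take (f : Fin n → ℝ) (k : ℕ) (hk : k ≤ n) :
    ∑ i ∈ Finset.univ.filter (fun i : Fin n => (i : ℕ) < k), f i
      = ((List.ofFn f).take k).sum := by
  induction k with
  | zero => simp
  | succ k ih =>
    have hk' : k < n := by omega
    have hlen : k < (List.ofFn f).length := by rw [List.length_ofFn]; omega
    rw [List.sum_take_succ _ _ hlen, ← ih (by omega), List.getElem_ofFn]
    have hins : Finset.univ.filter (fun i : Fin n => (i : ℕ) < k + 1)
        = insert ⟨k, hk'⟩ (Finset.univ.filter (fun i : Fin n => (i : ℕ) < k)) := by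
      ext i
      simp only [Finset.mem_filter, Finset.mem_univ, true_and, Finset.mem_insert]
      constructor
      · intro h
        rcases Nat.lt_or_ge (i : ℕ) k with h2 | h2
        · exact Or.inr h2
        · left
          apply Fin.ext
          simp only
          omega
      · rintro (rfl | h)
        · simp
        · omega
    rw [hins, Finset.sum_insert (by simp)]
    ring

lemma toL_mem {x : Fin n → ℝ} (hpos : ∀ i, 0 < x i)
    (ω : (Fin n → Bool) × Equiv.Perm (Fin n)) : toL x ω ∈ AF (List.ofFn x) := by
  have hLpos : ∀ a ∈ List.ofFn x, 0 < a := by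
    intro a ha
    obtain ⟨i, rfl⟩ := List.mem_ofFn.mp ha
    exact hpos i
  rw [mem_AF hLpos, toL, List.map_ofFn]
  have habs : (abs ∘ fun i => (if ω.1 i then (1:ℝ) else -1) * x (ω.2 i)) = fun i => x (ω.2 i) := by
    funext i
    by_cases h : ω.1 i <;> simp [h, abs_of_pos (hpos (ω.2 i))]
  rw [habs]
  rw [List.ofFn_eq_map, List.ofFn_eq_map]
  have hmm : (List.map (fun i => x (ω.2 i)) (List.finRange n))
      = List.map x (List.map ω.2 (List.finRange n)) := by
    rw [List.map_map]
    rfl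
  rw [hmm]
  apply List.Perm.map
  apply (List.perm_ext_iff_of_nodup ((List.nodup_finRange n).map ω.2.injective)
    (List.nodup_finRange n)).mpr
  intro i
  simp only [List.mem_finRange, List.mem_map, iff_true]
  first
  | exact ⟨ω.2.symm i, by simp⟩
  | exact ⟨ω.2.symm i, List.mem_finRange _, by simp⟩

lemma toL_inj {x : Fin n → ℝ} (hpos : ∀ i, 0 < x i) (hinj : Function.Injective x) :
    Function.Injective (toL x) := by
  intro ω ω' h
  rw [toL, toL, List.ofFn_inj] at h
  have hcomp : ∀ i, ω.1 i = ω'.1 i ∧ ω.2 i = ω'.2 i := by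
    intro i
    have hi := congrFun h i
    have hp1 := hpos (ω.2 i)
    have hp2 := hpos (ω'.2 i)
    by_cases h1 : ω.1 i <;> by_cases h2 : ω'.1 i
    · rw [if_pos h1, if_pos h2, one_mul, one_mul] at hi
      exact ⟨by rw [h1, h2], hinj hi⟩
    · rw [if_pos h1, if_neg h2, one_mul, neg_one_mul] at hi
      exfalso; linarith
    · rw [if_neg h1, if_pos h2, one_mul, neg_one_mul] at hi
      exfalso; linarith
    · rw [if_neg h1, if_neg h2, neg_one_mul, neg_one_mul] at hi
      refine ⟨?_, hinj (by linarith)⟩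
      rw [Bool.not_eq_true] at h1 h2
      rw [h1, h2]
  exact Prod.ext (funext fun i => (hcomp i).1) (Equiv.ext fun i => (hcomp i).2)

lemma toL_surj {x : Fin n → ℝ} (hpos : ∀ i, 0 < x i) (hinj : Function.Injective x) {l : List ℝ}
    (hl : l ∈ AF (List.ofFn x)) : ∃ ω, toL x ω = l := by
  have hLpos : ∀ a ∈ List.ofFn x, 0 < a := by
    intro a ha
    obtain ⟨i, rfl⟩ := List.mem_ofFn.mp ha
    exact hpos i
  have hperm : (l.map abs).Perm (List.ofFn x) := (mem_AF hLpos).mp hl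
  have hlen : l.length = n := by
    have := length_of_mem_AF hLpos hl
    simpa using this
  have hchoice : ∀ i : Fin n, ∃ j : Fin n, x j = |l[(i:ℕ)]'(by omega)| := by
    intro i
    have hmem : l[(i:ℕ)]'(by omega) ∈ l := List.getElem_mem _
    have h2 : |l[(i:ℕ)]'(by omega)| ∈ l.map abs := List.mem_map_of_mem (f := abs) hmem
    exact List.mem_ofFn.mp (hperm.subset h2)
  choose σ0 hσ0 using hchoice
  have hmnd : (l.map abs).Nodup := hperm.nodup_iff.mpr (List.nodup_ofFn.mpr hinj)
  have hσinj : Function.Injective σ0 := by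
    intro i i' hii
    have habs : |l[(i:ℕ)]'(by omega)| = |l[(i':ℕ)]'(by omega)| := by
      rw [← hσ0 i, ← hσ0 i', hii]
    have hgetinj := List.nodup_iff_injective_get.mp hmnd
    have h1 : (l.map abs).get ⟨(i:ℕ), by simpa [hlen] using i.isLt⟩
        = (l.map abs).get ⟨(i':ℕ), by simpa [hlen] using i'.isLt⟩ := by
      simp only [List.get_eq_getElem, List.getElem_map]
      exact habs
    have := hgetinj h1
    apply Fin.ext
    simpa using congrArg Fin.val this
  have hσbij : Function.Bijective σ0 := (Finite.injective_iff_bijective).mp hσinj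
  refine ⟨⟨fun i => decide (0 < l[(i:ℕ)]'(by omega)), Equiv.ofBijective σ0 hσbij⟩, ?_⟩
  rw [toL]
  apply List.ext_getElem (by simp [hlen])
  intro m h1 h2
  rw [List.getElem_ofFn]
  simp only [Equiv.ofBijective_apply, decide_eq_true_eq]
  have hmn : m < n := by omega
  have hval : x (σ0 ⟨m, hmn⟩) = |l[m]'h2| := hσ0 ⟨m, hmn⟩
  have hne : l[m]'h2 ≠ 0 := by
    intro h0
    have hp := hpos (σ0 ⟨m, hmn⟩)
    rw [hval, h0] at hp
    simp at hp
  rw [hval]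
  by_cases hsign : 0 < l[m]'h2
  · rw [if_pos hsign, abs_of_pos hsign]
    ring
  · have hneg : l[m]'h2 < 0 := lt_of_le_of_ne (not_lt.mp hsign) hne
    rw [if_neg hsign, abs_of_neg hneg]
    ring

lemma count_filter_eq {x : Fin n → ℝ} (hpos : ∀ i, 0 < x i) (hinj : Function.Injective x)
    (Q : List ℝ → Prop) :
    (Finset.univ.filter (fun ω : (Fin n → Bool) × Equiv.Perm (Fin n) => Q (toL x ω))).card
      = ((AF (List.ofFn x)).filter Q).card := by
  apply Finset.card_bij (fun ω _ => toL x ω)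
  · intro ω hω
    simp only [Finset.mem_filter, Finset.mem_univ, true_and] at hω ⊢
    exact ⟨toL_mem hpos ω, hω⟩
  · intro a _ b _ hab
    exact toL_inj hpos hinj hab
  · intro l hl
    simp only [Finset.mem_filter] at hl
    obtain ⟨ω, rfl⟩ := toL_surj hpos hinj hl.1
    exact ⟨ω, by simp [hl.2], rfl⟩

end glue

open MeasureTheory

/-- Under the law `P^(x)` obtained by uniformly permuting the coordinates of
`x ∈ [0,∞)ⁿ` and attaching i.i.d. uniform random signs, if `x` satisfies condition (H)
(all subset-sums are distinct), then
`P(S_k > 0, 1 ≤ k ≤ n) = g(n) = P(S_k ≥ 0, 1 ≤ k ≤ n)` with `g(n) = (2n choose n)/4ⁿ`;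
in particular these probabilities do not depend on `x`. -/
theorem sparre_andersen_uniform_model_no_ties
    (n : ℕ) (hn : 1 ≤ n) (x : Fin n → ℝ) (hx : ∀ i, 0 ≤ x i)
    (hH : ∀ I J : Finset (Fin n), I ≠ J → ∑ i ∈ I, x i ≠ ∑ j ∈ J, x j) :
    let Ω := (Fin n → Bool) × Equiv.Perm (Fin n)
    let P := @PMF.toMeasure Ω ⊤ (PMF.uniformOfFintype Ω)
    let S : ℕ → Ω → ℝ := fun k ω =>
      ∑ i ∈ Finset.univ.filter (fun i : Fin n => (i : ℕ) < k),
        (if ω.1 i then (1 : ℝ) else -1) * x (ω.2 i)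
    P {ω | ∀ k, 1 ≤ k → k ≤ n → 0 < S k ω}
        = ENNReal.ofReal ((Nat.choose (2 * n) n : ℝ) / 4 ^ n) ∧
    P {ω | ∀ k, 1 ≤ k → k ≤ n → 0 ≤ S k ω}
        = ENNReal.ofReal ((Nat.choose (2 * n) n : ℝ) / 4 ^ n) := by
  intro Ω P S
  have hxpos : ∀ i, 0 < x i := by
    intro i
    rcases (hx i).lt_or_eq with h | h
    · exact h
    · have hne : x i ≠ 0 := by simpa using hH {i} ∅ (by simp)
      exact absurd h.symm hne
  have hinj : Function.Injective x := by
    intro i j hij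
    by_contra hne
    exact hH {i} {j} (by simpa using hne) (by simpa using hij)
  have hG : Good (List.ofFn x) := good_ofFn hxpos hinj hH
  have hb : bcount (List.ofFn x) = df n := bcount_eq n _ (List.length_ofFn (f := x)) hG
  have hlenl : ∀ ω : Ω, (toL x ω).length = n := fun ω => by simp [toL]
  have hS : ∀ (ω : Ω) (k : ℕ), k ≤ n → S k ω = ((toL x ω).take k).sum := by
    intro ω k hk
    exact S_take _ k hk
  have hposiff : ∀ ω : Ω, (∀ k, 1 ≤ k → k ≤ n → 0 < S k ω) ↔ pos (toL x ω) := by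
    intro ω
    constructor
    · intro h k h1 h2
      rw [hlenl ω] at h2
      rw [← hS ω k h2]
      exact h k h1 h2
    · intro h k h1 h2
      rw [hS ω k h2]
      exact h k h1 (by rw [hlenl ω]; exact h2)
  have hne0 : ∀ (ω : Ω) (k : ℕ), 1 ≤ k → k ≤ n → S k ω ≠ 0 := by
    intro ω k h1 h2
    rw [hS ω k h2]
    have hs := seg_ne hG (toL_mem hxpos ω) (show (0:ℕ) < k by omega) (by rw [hlenl]; omega)
    have hs' : (0:ℝ) ≠ ((toL x ω).take k).sum := by simpa using hs
    exact fun hc => hs' hc.symm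
  have hcount : (Finset.univ.filter (fun ω : Ω => pos (toL x ω))).card = df n := by
    rw [count_filter_eq hxpos hinj pos]
    exact hb
  have hcardΩ : Fintype.card Ω = 2^n * n.factorial := by
    rw [Fintype.card_prod, Fintype.card_fun, Fintype.card_perm]
    simp
  have key : ∀ (p : Ω → Prop), (∀ ω, p ω ↔ pos (toL x ω)) →
      P {ω | p ω} = ENNReal.ofReal ((Nat.choose (2 * n) n : ℝ) / 4 ^ n) := by
    intro p hp
    have hmeas : @MeasurableSet Ω ⊤ {ω | p ω} := trivial
    have happ := @PMF.toMeasure_uniformOfFintype_apply Ω _ _ {ω | p ω} ⊤ hmeas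
    rw [show P = (@PMF.toMeasure Ω ⊤ (PMF.uniformOfFintype Ω)) from rfl, happ]
    have hsetcard : Fintype.card ↑{ω : Ω | p ω} = df n := by
      rw [Fintype.card_congr (Equiv.subtypeEquivRight (q := fun ω => pos (toL x ω))
        (fun ω => by simpa using hp ω))]
      rw [Fintype.card_subtype]
      exact hcount
    rw [hsetcard, hcardΩ]
    have hdpos : (0:ℝ) < ((2^n * n.factorial : ℕ) : ℝ) := by
      have : 0 < 2^n * n.factorial := Nat.mul_pos (Nat.pow_pos (n := n) (by norm_num)) n.factorial_pos
      exact_mod_cast this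
    rw [← ENNReal.ofReal_natCast (df n), ← ENNReal.ofReal_natCast (2^n * n.factorial),
      ← ENNReal.ofReal_div_of_pos hdpos]
    congr 1
    have hcast : ((df n : ℕ) : ℝ) / ((2^n * n.factorial : ℕ) : ℝ)
        = (df n : ℝ) / ((2:ℝ)^n * (n.factorial : ℝ)) := by
      push_cast
      ring
    rw [hcast, df_eq_central n]
  constructor
  · exact key _ hposiff
  · apply key
    intro ω
    rw [← hposiff ω]
    constructor
    · intro h k h1 h2
      exact lt_of_le_of_ne (h k h1 h2) (Ne.symm (hne0 ω k h1 h2))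
    · intro h k h1 h2
      exact (h k h1 h2).le
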